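/- Let G_{t,i} = ϑ_{t,i} δ^{-1} A^H B^{t-i} and H_{t,i} = ϑ_{t,i}(δ^{-1} W_{t-i} − w_{t-i} I) with W_k = A^H B^k A, w_k = (1/M) tr{W_k}, δ = M/N. Then (1/N) tr{G_{t,i}^H G_{t',j}} = ϑ_{t,i} ϑ_{t',j} δ^{-1} w_{t+t'-i-j} and (1/N) tr{H_{t,i}^H H_{t',j}} = ϑ_{t,i} ϑ_{t',j} ( δ^{-1}(λ† w_{t+t'-i-j} − w_{t+t'-i-j+1}) − w_{t-i} w_{t'-j} ). -/

import Mathlib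

open Matrix

/-- State-evolution coefficients of BO-GMAMP: with `B = λ†I − AAᴴ`, `W_k = Aᴴ Bᵏ A`,
`w_k = (1/M) tr W_k`, `δ = M/N`, `G_{t,i} = ϑ_{t,i} δ⁻¹ Aᴴ B^{t−i}` and
`H_{t,i} = ϑ_{t,i}(δ⁻¹ W_{t−i} − w_{t−i} I)`:
`(1/N) tr{G_{t,i}ᴴ G_{t',j}} = ϑ_{t,i} ϑ_{t',j} δ⁻¹ w_{t+t'−i−j}` and
`(1/N) tr{H_{t,i}ᴴ H_{t',j}} = ϑ_{t,i} ϑ_{t',j}(δ⁻¹(λ† w_{t+t'−i−j} − w_{t+t'−i−j+1}) − w_{t−i} w_{t'−j})`. -/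
theorem stmt19 {M N : ℕ} (hM : 0 < M) (hN : 0 < N)
    (A : Matrix (Fin M) (Fin N) ℂ) (lam : ℝ)
    (B : Matrix (Fin M) (Fin M) ℂ)
    (hB : B = (lam : ℂ) • (1 : Matrix (Fin M) (Fin M) ℂ) - A * Aᴴ)
    (W : ℕ → Matrix (Fin N) (Fin N) ℂ) (hW : ∀ k, W k = Aᴴ * B ^ k * A)
    (w : ℕ → ℂ) (hw : ∀ k, w k = (M : ℂ)⁻¹ * (W k).trace)
    (δ : ℂ) (hδ : δ = (M : ℂ) / (N : ℂ))
    (t i t' j : ℕ) (hi : i ≤ t) (hj : j ≤ t')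
    (ϑ ϑ' : ℝ)
    (G G' : Matrix (Fin N) (Fin M) ℂ)
    (hG : G = (ϑ : ℂ) • δ⁻¹ • (Aᴴ * B ^ (t - i)))
    (hG' : G' = (ϑ' : ℂ) • δ⁻¹ • (Aᴴ * B ^ (t' - j)))
    (H H' : Matrix (Fin N) (Fin N) ℂ)
    (hH : H = (ϑ : ℂ) • (δ⁻¹ • W (t - i) - w (t - i) • (1 : Matrix (Fin N) (Fin N) ℂ)))
    (hH' : H' = (ϑ' : ℂ) • (δ⁻¹ • W (t' - j) - w (t' - j) • (1 : Matrix (Fin N) (Fin N) ℂ))) :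
    (N : ℂ)⁻¹ * (Gᴴ * G').trace = (ϑ : ℂ) * (ϑ' : ℂ) * δ⁻¹ * w (t + t' - i - j)
    ∧ (N : ℂ)⁻¹ * (Hᴴ * H').trace
        = (ϑ : ℂ) * (ϑ' : ℂ) *
            (δ⁻¹ * ((lam : ℂ) * w (t + t' - i - j) - w (t + t' - i - j + 1))
              - w (t - i) * w (t' - j)) := by
  have hM0 : (M : ℂ) ≠ 0 := Nat.cast_ne_zero.mpr hM.ne'
  have hN0 : (N : ℂ) ≠ 0 := Nat.cast_ne_zero.mpr hN.ne'
  set a := t - i with ha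
  set b := t' - j with hb
  have hab : t + t' - i - j = a + b := by omega
  rw [hab]
  -- B is Hermitian
  have hBH : Bᴴ = B := by
    rw [hB]
    simp [conjTranspose_sub, conjTranspose_smul, conjTranspose_mul, Complex.conj_ofReal]
  have hBpow : ∀ k : ℕ, (B ^ k)ᴴ = B ^ k := by
    intro k; rw [conjTranspose_pow, hBH]
  have hAA : A * Aᴴ = (lam : ℂ) • (1 : Matrix (Fin M) (Fin M) ℂ) - B := by
    rw [hB]; abel
  -- trace of W k
  have htr : ∀ k, (Aᴴ * B ^ k * A).trace = (M : ℂ) * w k := by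
    intro k
    rw [hw k, hW k, ← mul_assoc, mul_inv_cancel₀ hM0, one_mul]
  have key : ∀ p q : ℕ, (B ^ p * A * (Aᴴ * B ^ q)).trace = (M : ℂ) * w (p + q) := by
    intro p q
    rw [trace_mul_comm]
    have : Aᴴ * B ^ q * (B ^ p * A) = Aᴴ * B ^ (q + p) * A := by
      rw [pow_add]; simp only [← Matrix.mul_assoc]
    rw [this, htr, Nat.add_comm q p]
  -- star facts
  have hWH : ∀ k, (W k)ᴴ = W k := by
    intro k
    rw [hW k]
    simp only [conjTranspose_mul, conjTranspose_conjTranspose, hBpow, Matrix.mul_assoc]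
  have hws : ∀ k, star (w k) = w k := by
    intro k
    rw [hw k]
    rw [star_mul']
    rw [show star ((W k).trace) = ((W k)ᴴ).trace from (trace_conjTranspose (W k)).symm]
    rw [hWH]
    simp
  have hδs : star δ⁻¹ = δ⁻¹ := by
    rw [hδ]; simp
  -- Part 1
  constructor
  · rw [hG, hG']
    rw [conjTranspose_smul, conjTranspose_smul, conjTranspose_mul, hBpow,
      conjTranspose_conjTranspose, hδs]
    simp only [Complex.star_def, Complex.conj_ofReal, Matrix.smul_mul, Matrix.mul_smul,
      trace_smul, smul_eq_mul, hδ]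
    rw [key a b]
    field_simp
  · rw [hH, hH']
    rw [conjTranspose_smul, conjTranspose_sub, conjTranspose_smul, conjTranspose_smul,
      hWH, conjTranspose_one, hδs, hws]
    have keyWW : (W a * W b).trace
        = (lam : ℂ) * ((M : ℂ) * w (a + b)) - (M : ℂ) * w (a + b + 1) := by
      rw [hW a, hW b]
      have h1 : Aᴴ * B ^ a * A * (Aᴴ * B ^ b * A)
          = Aᴴ * B ^ a * (A * Aᴴ) * B ^ b * A := by simp only [Matrix.mul_assoc]
      rw [h1, hAA]
      have h2 : Aᴴ * B ^ a * ((lam : ℂ) • (1 : Matrix (Fin M) (Fin M) ℂ) - B) * B ^ b * A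
          = (lam : ℂ) • (Aᴴ * B ^ (a + b) * A) - Aᴴ * B ^ (a + b + 1) * A := by
        rw [show a + b + 1 = a + (1 + b) from by omega, pow_add B a b, pow_add B a (1 + b),
          pow_add B 1 b, pow_one]
        simp only [Matrix.mul_sub, Matrix.sub_mul, Matrix.mul_smul, Matrix.smul_mul,
          Matrix.mul_one, Matrix.mul_assoc]
      rw [h2, trace_sub, trace_smul, htr, htr, smul_eq_mul]
    simp only [Matrix.mul_sub, Matrix.sub_mul, Matrix.smul_mul, Matrix.mul_smul,
      smul_smul, Matrix.mul_one, Matrix.one_mul, trace_sub, trace_smul, smul_eq_mul,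
      trace_one]
    rw [keyWW]
    have htrW : ∀ k, (W k).trace = (M : ℂ) * w k := by
      intro k
      rw [hw k, ← mul_assoc, mul_inv_cancel₀ hM0, one_mul]
    rw [htrW, htrW]
    rw [hδ]
    have hcard : (Fintype.card (Fin N) : ℂ) = (N : ℂ) := by simp
    rw [hcard]
    field_simp
    simp only [Complex.star_def, Complex.conj_ofReal]
    ring
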